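/- Let K ⊂ ℂ^n be compact and suppose for each k ≥ 1 there is a finite set A_k ⊆ K and a constant C_k ≥ 1 such that sup_{z ∈ K} |p(z)| ≤ C_k max_{a ∈ A_k} |p(a)| for every polynomial p of degree at most k, and suppose both C_k and the cardinality of A_k grow at most polynomially in k (i.e., there exist C, s > 0 with C_k + card(A_k) ≤ C k^s for all k ≥ 1). Then there exists a finite Borel measure ν with support contained in K, with ν(ℂ^n ∖ ⋃_k A_k) = 0, such that (K, ν) satisfies the Bernstein–Markov property. -/

import Mathlib

open MeasureTheory ENNReal

/-- `(K, ν)` satisfies the Bernstein–Markov property in `ℂ^n`. -/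
def BernsteinMarkov {n : ℕ} (K : Set (Fin n → ℂ)) (ν : Measure (Fin n → ℂ)) : Prop :=
  ∀ ε : ℝ, 0 < ε → ∃ C : ℝ, 0 < C ∧ ∀ k : ℕ, 1 ≤ k → ∀ p : MvPolynomial (Fin n) ℂ,
    p.totalDegree ≤ k → ∀ z ∈ K,
      ‖MvPolynomial.eval z p‖ ≤
        C * (1 + ε) ^ k * Real.sqrt (∫ w in K, ‖MvPolynomial.eval w p‖ ^ 2 ∂ν)

/-- Polynomial growth is beaten by exponential growth. -/
lemma aux_poly_le_exp (t : ℕ) {ε : ℝ} (hε : 0 < ε) :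
    ∃ C : ℝ, 0 < C ∧ ∀ k : ℕ, (k : ℝ) ^ t ≤ C * (1 + ε) ^ k := by
  have hr : (1 : ℝ) < 1 + ε := by linarith
  have h := tendsto_pow_const_div_const_pow_of_one_lt t hr
  obtain ⟨B, hB⟩ := h.bddAbove_range
  refine ⟨max B 1, lt_of_lt_of_le one_pos (le_max_right _ _), fun k => ?_⟩
  have hpos : (0 : ℝ) < (1 + ε) ^ k := pow_pos (by linarith) k
  have hk : (k : ℝ) ^ t / (1 + ε) ^ k ≤ max B 1 :=
    le_trans (hB (Set.mem_range_self k)) (le_max_left _ _)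
  calc (k : ℝ) ^ t = ((k : ℝ) ^ t / (1 + ε) ^ k) * (1 + ε) ^ k := by
        field_simp
    _ ≤ max B 1 * (1 + ε) ^ k := by
        exact mul_le_mul_of_nonneg_right hk (le_of_lt hpos)

/-- If `K ⊂ ℂ^n` is compact and `{A_k}` is a weakly admissible mesh for `K` — i.e.
`A_k ⊆ K` are finite sets with `sup_K |p| ≤ C_k max_{a ∈ A_k} |p(a)|` for all polynomials
`p` of degree at most `k`, where `C_k ≥ 1` and both `C_k` and `card A_k` grow at most
polynomially in `k` — then there exists a finite measure `ν` supported in `K`, carried by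
`⋃_k A_k`, such that `(K, ν)` satisfies the Bernstein–Markov property. -/
theorem wam_gives_bernstein_markov_measure {n : ℕ}
    (K : Set (Fin n → ℂ)) (hK : IsCompact K)
    (A : ℕ → Finset (Fin n → ℂ)) (Ck : ℕ → ℝ)
    (hA : ∀ k : ℕ, 1 ≤ k → (A k : Set (Fin n → ℂ)) ⊆ K)
    (hCk : ∀ k : ℕ, 1 ≤ k → 1 ≤ Ck k)
    (hmesh : ∀ k : ℕ, 1 ≤ k → ∀ p : MvPolynomial (Fin n) ℂ, p.totalDegree ≤ k →
      ∀ z ∈ K, ‖MvPolynomial.eval z p‖ ≤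
        Ck k * sSup ((fun a => ‖MvPolynomial.eval a p‖) '' (A k : Set (Fin n → ℂ))))
    (hgrowth : ∃ C s : ℝ, 0 < C ∧ 0 < s ∧ ∀ k : ℕ, 1 ≤ k →
      Ck k + ((A k).card : ℝ) ≤ C * (k : ℝ) ^ s) :
    ∃ ν : Measure (Fin n → ℂ), IsFiniteMeasure ν ∧ ν Kᶜ = 0 ∧
      ν (⋃ k : ℕ, (A k : Set (Fin n → ℂ)))ᶜ = 0 ∧
      BernsteinMarkov K ν := by
  classical
  -- dispose of the case `K = ∅`
  rcases Set.eq_empty_or_nonempty K with hKe | ⟨z₀, hz₀⟩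
  · refine ⟨0, inferInstance, rfl, rfl, fun ε hε => ⟨1, one_pos, fun k hk p hp z hz => ?_⟩⟩
    rw [hKe] at hz; exact absurd hz (Set.notMem_empty z)
  obtain ⟨C, s, hC, hs, hgr⟩ := hgrowth
  -- replace the real exponent `s` by a natural exponent `m`
  set m : ℕ := ⌈s⌉₊ with hm
  have hbound : ∀ k : ℕ, 1 ≤ k → Ck k ≤ C * (k : ℝ) ^ m ∧ ((A k).card : ℝ) ≤ C * (k : ℝ) ^ m := by
    intro k hk
    have hk1 : (1 : ℝ) ≤ (k : ℝ) := by exact_mod_cast hk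
    have hsm : (k : ℝ) ^ s ≤ (k : ℝ) ^ (m : ℝ) :=
      Real.rpow_le_rpow_of_exponent_le hk1 (Nat.le_ceil s)
    have hnat : (k : ℝ) ^ (m : ℝ) = (k : ℝ) ^ m := Real.rpow_natCast _ m
    have h := hgr k hk
    have hsum : Ck k + ((A k).card : ℝ) ≤ C * (k : ℝ) ^ m := by
      calc Ck k + ((A k).card : ℝ) ≤ C * (k : ℝ) ^ s := h
        _ ≤ C * (k : ℝ) ^ m := by
            rw [← hnat]; exact mul_le_mul_of_nonneg_left hsm (le_of_lt hC)
    have h1 : (1 : ℝ) ≤ Ck k := hCk k hk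
    have h2 : (0 : ℝ) ≤ ((A k).card : ℝ) := Nat.cast_nonneg _
    constructor <;> linarith
  clear hm
  clear_value m
  -- each `A k` (k ≥ 1) is nonempty
  have hAne : ∀ k : ℕ, 1 ≤ k → (A k).Nonempty := by
    intro k hk
    by_contra hne
    rw [Finset.not_nonempty_iff_eq_empty] at hne
    have h := hmesh k hk 1 (by simp) z₀ hz₀
    simp [hne, Real.sSup_empty] at h
    linarith
  -- the weights
  set w : ℕ → ℝ := fun k => ((k : ℝ) ^ (2 * m + 2))⁻¹ with hw
  have hwpos : ∀ k : ℕ, 1 ≤ k → 0 < w k := by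
    intro k hk
    have : (0 : ℝ) < (k : ℝ) := by exact_mod_cast hk
    positivity
  -- the measure
  set μ : ℕ → Measure (Fin n → ℂ) := fun j =>
    ENNReal.ofReal (w (j + 1)) • (∑ a ∈ A (j + 1), Measure.dirac a) with hμ
  set ν : Measure (Fin n → ℂ) := Measure.sum μ with hν
  -- values of `ν` on sets
  have hν_apply : ∀ t : Set (Fin n → ℂ),
      ν t = ∑' j : ℕ, ENNReal.ofReal (w (j + 1)) * ∑ a ∈ A (j + 1), Measure.dirac a t := by
    intro t
    rw [hν, Measure.sum_apply_of_countable]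
    congr 1; funext j
    rw [hμ]
    simp [Measure.smul_apply, Measure.finset_sum_apply]
  -- finiteness
  have hfin : ν Set.univ < ⊤ := by
    rw [hν_apply]
    have hterm : ∀ j : ℕ,
        ENNReal.ofReal (w (j + 1)) * ∑ a ∈ A (j + 1), Measure.dirac a Set.univ
          ≤ ENNReal.ofReal (C * (((j : ℝ) + 1) ^ 2)⁻¹) := by
      intro j
      have hj1 : (1 : ℕ) ≤ j + 1 := Nat.le_add_left 1 j
      have hcard := (hbound (j + 1) hj1).2
      have hjpos : (0 : ℝ) < ((j : ℝ) + 1) := by positivity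
      have hdirac : (∑ a ∈ A (j + 1), Measure.dirac a Set.univ)
          = ((A (j + 1)).card : ℝ≥0∞) := by
        simp
      rw [hdirac]
      have hcn : ((A (j + 1)).card : ℝ≥0∞) = ENNReal.ofReal ((A (j + 1)).card : ℝ) := by
        simp
      rw [hcn, ← ENNReal.ofReal_mul (by positivity)]
      apply ENNReal.ofReal_le_ofReal
      have hcast : ((j + 1 : ℕ) : ℝ) = (j : ℝ) + 1 := by push_cast; ring
      have hle : w (j + 1) * ((A (j + 1)).card : ℝ)
          ≤ (((j : ℝ) + 1) ^ (2 * m + 2))⁻¹ * (C * ((j : ℝ) + 1) ^ m) := by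
        rw [hw]
        simp only [hcast]
        exact mul_le_mul_of_nonneg_left (by rw [← hcast]; exact_mod_cast hcard)
          (by positivity)
      refine hle.trans ?_
      have heq : (((j : ℝ) + 1) ^ (2 * m + 2))⁻¹ * (C * ((j : ℝ) + 1) ^ m)
          = C * (((j : ℝ) + 1) ^ (m + 2))⁻¹ := by
        have hsplit : ((j : ℝ) + 1) ^ (2 * m + 2)
            = ((j : ℝ) + 1) ^ m * ((j : ℝ) + 1) ^ (m + 2) := by
          rw [← pow_add]; ring_nf
        rw [hsplit]
        field_simp
      rw [heq]
      apply mul_le_mul_of_nonneg_left _ (le_of_lt hC)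
      apply inv_anti₀ (by positivity)
      exact pow_le_pow_right₀ (by linarith) (by omega)
    calc (∑' j : ℕ, ENNReal.ofReal (w (j + 1)) * ∑ a ∈ A (j + 1), Measure.dirac a Set.univ)
        ≤ ∑' j : ℕ, ENNReal.ofReal (C * (((j : ℝ) + 1) ^ 2)⁻¹) := ENNReal.tsum_le_tsum hterm
      _ < ⊤ := by
          have hsummable : Summable (fun j : ℕ => C * (((j : ℝ) + 1) ^ 2)⁻¹) := by
            apply Summable.mul_left
            have := Real.summable_one_div_nat_pow.mpr (by norm_num : 1 < 2)
            have h2 := (summable_nat_add_iff 1).mpr this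
            simpa [one_div] using h2
          rw [← ENNReal.ofReal_tsum_of_nonneg (fun j => by positivity) hsummable]
          exact ENNReal.ofReal_lt_top
  haveI hfinI : IsFiniteMeasure ν := ⟨hfin⟩
  -- ν vanishes off K and off the union of the meshes
  have hνK : ν Kᶜ = 0 := by
    rw [hν_apply]
    refine ENNReal.tsum_eq_zero.mpr fun j => ?_
    have : (∑ a ∈ A (j + 1), Measure.dirac a Kᶜ) = 0 := by
      refine Finset.sum_eq_zero fun a ha => ?_
      have haK : a ∈ K := hA (j + 1) (Nat.le_add_left 1 j) ha
      rw [Measure.dirac_apply]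
      exact Set.indicator_of_notMem (Set.notMem_compl_iff.mpr haK) _
    rw [this, mul_zero]
  have hνU : ν (⋃ k : ℕ, (A k : Set (Fin n → ℂ)))ᶜ = 0 := by
    rw [hν_apply]
    refine ENNReal.tsum_eq_zero.mpr fun j => ?_
    have : (∑ a ∈ A (j + 1), Measure.dirac a (⋃ k : ℕ, (A k : Set (Fin n → ℂ)))ᶜ) = 0 := by
      refine Finset.sum_eq_zero fun a ha => ?_
      have haU : a ∈ ⋃ k : ℕ, (A k : Set (Fin n → ℂ)) :=
        Set.mem_iUnion.mpr ⟨j + 1, ha⟩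
      rw [Measure.dirac_apply]
      exact Set.indicator_of_notMem (Set.notMem_compl_iff.mpr haU) _
    rw [this, mul_zero]
  -- lower bound for ν on singletons of A k
  have hν_single : ∀ k : ℕ, 1 ≤ k → ∀ a ∈ A k, ENNReal.ofReal (w k) ≤ ν {a} := by
    intro k hk a ha
    obtain ⟨j, rfl⟩ : ∃ j, k = j + 1 := ⟨k - 1, by omega⟩
    rw [hν_apply]
    have hterm : ENNReal.ofReal (w (j + 1))
        ≤ ENNReal.ofReal (w (j + 1)) * ∑ b ∈ A (j + 1), Measure.dirac b {a} := by
      have h1 : (1 : ℝ≥0∞) ≤ ∑ b ∈ A (j + 1), Measure.dirac b {a} := by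
        have : Measure.dirac a {a} = 1 := by
          rw [Measure.dirac_apply]; simp
        calc (1 : ℝ≥0∞) = Measure.dirac a {a} := this.symm
          _ ≤ ∑ b ∈ A (j + 1), Measure.dirac b {a} :=
            Finset.single_le_sum (f := fun b => Measure.dirac b {a})
              (fun b _ => zero_le) ha
      calc ENNReal.ofReal (w (j + 1)) = ENNReal.ofReal (w (j + 1)) * 1 := (mul_one _).symm
        _ ≤ _ := mul_le_mul_right h1 _
    exact hterm.trans (ENNReal.le_tsum j)
  -- make ν opaque from now on
  clear hν_apply hν hμ
  clear_value ν μ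
  clear μ
  -- the Bernstein–Markov property
  refine ⟨ν, hfinI, hνK, hνU, ?_⟩
  intro ε hε
  obtain ⟨D, hD, hDk⟩ := aux_poly_le_exp (2 * m + 1) hε
  refine ⟨C * D, mul_pos hC hD, ?_⟩
  intro k hk p hp z hz
  set f : (Fin n → ℂ) → ℝ := fun w => ‖MvPolynomial.eval w p‖ ^ 2 with hf
  set I : ℝ := ∫ w in K, f w ∂ν with hI
  have hInn : 0 ≤ I := integral_nonneg fun w => by positivity
  -- pick the point of A k where the sup is attained
  set S : Set ℝ := (fun a => ‖MvPolynomial.eval a p‖) '' (A k : Set (Fin n → ℂ)) with hS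
  have hSne : S.Nonempty := (hAne k hk).to_set.image _
  have hSfin : S.Finite := ((A k).finite_toSet).image _
  obtain ⟨a, haA, haeq⟩ := hSne.csSup_mem hSfin
  have haK : a ∈ K := hA k hk haA
  have hkpos : (0 : ℝ) < (k : ℝ) := by exact_mod_cast hk
  -- integrability of f on K
  have hf_cont : Continuous f := ((MvPolynomial.continuous_eval p).norm.pow 2)
  have hint : IntegrableOn f K ν := hf_cont.continuousOn.integrableOn_compact hK
  -- the integral bound: w k * ‖eval a p‖ ^ 2 ≤ I
  have hIb : w k * ‖MvPolynomial.eval a p‖ ^ 2 ≤ I := by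
    have hsub : ({a} : Set (Fin n → ℂ)) ⊆ K := by
      intro x hx; rw [Set.mem_singleton_iff] at hx; rw [hx]; exact haK
    have h1 : ∫ x in ({a} : Set (Fin n → ℂ)), f x ∂ν ≤ I :=
      setIntegral_mono_set hint
        (Filter.Eventually.of_forall fun x => by positivity)
        (HasSubset.Subset.eventuallyLE hsub)
    have h2 : ∫ x in ({a} : Set (Fin n → ℂ)), f x ∂ν = (ν {a}).toReal * f a := by
      rw [integral_singleton]; simp [smul_eq_mul]; exact Or.inl rfl
    have h3 : w k ≤ (ν {a}).toReal := by
      have := hν_single k hk a haA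
      have hne : ν {a} ≠ ⊤ := measure_ne_top ν _
      calc w k = (ENNReal.ofReal (w k)).toReal :=
            (ENNReal.toReal_ofReal (le_of_lt (hwpos k hk))).symm
        _ ≤ (ν {a}).toReal := ENNReal.toReal_mono hne this
    calc w k * ‖MvPolynomial.eval a p‖ ^ 2
        ≤ (ν {a}).toReal * f a := by
          apply mul_le_mul_of_nonneg_right h3 (by positivity)
      _ = ∫ x in ({a} : Set (Fin n → ℂ)), f x ∂ν := h2.symm
      _ ≤ I := h1
  clear hI hint
  clear_value I
  -- from the integral bound: ‖eval a p‖ ≤ √I * k^(m+1)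
  have hsqrt : ‖MvPolynomial.eval a p‖ ≤ Real.sqrt I * (k : ℝ) ^ (m + 1) := by
    have hx2 : ‖MvPolynomial.eval a p‖ ^ 2 ≤ I * (k : ℝ) ^ (2 * m + 2) := by
      have hk0 : ((k : ℝ)) ≠ 0 := ne_of_gt hkpos
      have hwk : w k * (k : ℝ) ^ (2 * m + 2) = 1 := by
        simp only [hw]
        field_simp
      have := mul_le_mul_of_nonneg_right hIb (le_of_lt (pow_pos hkpos (2 * m + 2)))
      calc ‖MvPolynomial.eval a p‖ ^ 2
          = w k * ‖MvPolynomial.eval a p‖ ^ 2 * (k : ℝ) ^ (2 * m + 2) := by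
            rw [mul_comm (w k), mul_assoc, hwk, mul_one]
        _ ≤ I * (k : ℝ) ^ (2 * m + 2) := this
    have h2 : ‖MvPolynomial.eval a p‖ ≤ Real.sqrt (I * (k : ℝ) ^ (2 * m + 2)) :=
      Real.le_sqrt_of_sq_le hx2
    have h3 : Real.sqrt (I * (k : ℝ) ^ (2 * m + 2)) = Real.sqrt I * (k : ℝ) ^ (m + 1) := by
      rw [Real.sqrt_mul hInn]
      congr 1
      have h2m : 2 * m + 2 = (m + 1) * 2 := by omega
      have : (k : ℝ) ^ (2 * m + 2) = ((k : ℝ) ^ (m + 1)) ^ 2 := by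
        rw [h2m, pow_mul]
      rw [this, Real.sqrt_sq (by positivity)]
    rwa [h3] at h2
  -- assemble
  have hmesh' := hmesh k hk p hp z hz
  rw [← hS, haeq.symm] at hmesh'
  have hCkk : Ck k ≤ C * (k : ℝ) ^ m := (hbound k hk).1
  have hCkpos : (0 : ℝ) ≤ Ck k := le_trans zero_le_one (hCk k hk)
  calc ‖MvPolynomial.eval z p‖ ≤ Ck k * ‖MvPolynomial.eval a p‖ := hmesh'
    _ ≤ Ck k * (Real.sqrt I * (k : ℝ) ^ (m + 1)) :=
        mul_le_mul_of_nonneg_left hsqrt hCkpos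
    _ ≤ (C * (k : ℝ) ^ m) * (Real.sqrt I * (k : ℝ) ^ (m + 1)) := by
        apply mul_le_mul_of_nonneg_right hCkk (by positivity)
    _ = C * ((k : ℝ) ^ (2 * m + 1)) * Real.sqrt I := by
        rw [show 2 * m + 1 = m + (m + 1) by omega, pow_add]; ring
    _ ≤ C * (D * (1 + ε) ^ k) * Real.sqrt I := by
        apply mul_le_mul_of_nonneg_right _ (Real.sqrt_nonneg _)
        exact mul_le_mul_of_nonneg_left (hDk k) (le_of_lt hC)
    _ = C * D * (1 + ε) ^ k * Real.sqrt I := by ring
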